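/- Let (G,P) be a quasi-lattice ordered group. Let F ⊆ P be a finite subset and suppose that for each p ∈ F a set Ω_p ∈ B_P with p ∈ Ω_p is given. Then there exists a finite subset E ⊆ P with E ∩ F = ∅ such that P = (⋃_{p∈F} Ω_p) ∪ (⋃_{q∈E} qP). -/
import Mathlib


/-- The order on `G` induced by the submonoid `P`: `g ≤ h` iff `g⁻¹ * h ∈ P`. -/
def QLe {G : Type*} [Group G] (P : Submonoid G) (g h : G) : Prop := g⁻¹ * h ∈ P

/-- `u` is the least upper bound of `g` and `h` with respect to `QLe P`. -/
def QLub {G : Type*} [Group G] (P : Submonoid G) (g h u : G) : Prop :=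
  QLe P g u ∧ QLe P h u ∧ ∀ v, QLe P g v → QLe P h v → QLe P u v

/-- `(G, P)` is a quasi-lattice ordered group. -/
structure QuasiLatticeOrdered {G : Type*} [Group G] (P : Submonoid G) : Prop where
  gen : Subgroup.closure (P : Set G) = ⊤
  cap : ∀ g ∈ P, g⁻¹ ∈ P → g = 1
  lub : ∀ g h : G, (∃ u, QLe P g u ∧ QLe P h u) → ∃ u, QLub P g h u

/-- Membership in the algebra `B_P` of subsets of `P` generated by the sets
`pP = {x | p⁻¹ x ∈ P}`, `p ∈ P`: the smallest collection of subsets containing the sets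
`pP` and closed under complements in `P`, finite unions and finite intersections. -/
inductive MemBP {G : Type*} [Group G] (P : Submonoid G) : Set G → Prop
  | basic (p : G) (hp : p ∈ P) : MemBP P {x | QLe P p x}
  | compl (Ω : Set G) : MemBP P Ω → MemBP P ((P : Set G) \ Ω)
  | union (Ω₁ Ω₂ : Set G) : MemBP P Ω₁ → MemBP P Ω₂ → MemBP P (Ω₁ ∪ Ω₂)
  | inter (Ω₁ Ω₂ : Set G) : MemBP P Ω₁ → MemBP P Ω₂ → MemBP P (Ω₁ ∩ Ω₂)

/-- For a finite set `J ⊆ P \ {e}`, `Ω_J = ⋂_{q ∈ J} (P \ qP)`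
(with the convention `Ω_∅ = P`). -/
def OmegaJ {G : Type*} [Group G] (P : Submonoid G) (J : Finset G) : Set G :=
  (P : Set G) ∩ ⋂ q ∈ J, {x | QLe P q x}ᶜ

section Aux
variable {G : Type*} [Group G] (P : Submonoid G)

lemma qle_refl (g : G) : QLe P g g := by
  simp only [QLe, inv_mul_cancel]
  exact one_mem P

lemma qle_trans {a b c : G} (h1 : QLe P a b) (h2 : QLe P b c) : QLe P a c := by
  have := mul_mem h1 h2
  simpa [QLe, mul_assoc] using this

lemma qle_mem {a b : G} (ha : a ∈ P) (h : QLe P a b) : b ∈ P := by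
  have := mul_mem ha h
  simpa using this

lemma qle_antisymm (hQL : QuasiLatticeOrdered P) {a b : G}
    (h1 : QLe P a b) (h2 : QLe P b a) : b = a := by
  have h3 : (a⁻¹ * b)⁻¹ ∈ P := by rw [mul_inv_rev, inv_inv]; exact h2
  have := hQL.cap _ h1 h3
  have : a * (a⁻¹ * b) = a * 1 := by rw [this]
  simpa using this

lemma memBP_subset {Ω : Set G} (h : MemBP P Ω) : Ω ⊆ (P : Set G) := by
  induction h with
  | basic p hp => intro x hx; exact qle_mem P hp hx
  | compl Ω h ih => exact Set.diff_subset
  | union Ω₁ Ω₂ h1 h2 ih1 ih2 => exact Set.union_subset ih1 ih2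
  | inter Ω₁ Ω₂ h1 h2 ih1 ih2 => exact Set.Subset.trans Set.inter_subset_left ih1

lemma local_cover (hQL : QuasiLatticeOrdered P) {Ω : Set G} (hΩ : MemBP P Ω)
    (p : G) (hp : p ∈ P) :
    ∃ J : Finset G, (∀ q ∈ J, q ∈ P ∧ QLe P p q ∧ q ≠ p) ∧
      (p ∈ Ω → {x | QLe P p x} \ Ω ⊆ ⋃ q ∈ J, {x | QLe P q x}) ∧
      (p ∉ Ω → {x | QLe P p x} ∩ Ω ⊆ ⋃ q ∈ J, {x | QLe P q x}) := by
  classical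
  induction hΩ with
  | basic r hr =>
    by_cases hrp : QLe P r p
    · refine ⟨∅, by simp, ?_, ?_⟩
      · intro _ x hx
        exact absurd (qle_trans P hrp hx.1) hx.2
      · intro h
        exact absurd hrp h
    · by_cases hex : ∃ x, QLe P p x ∧ QLe P r x
      · obtain ⟨u, hu⟩ := hQL.lub p r hex
        refine ⟨{u}, ?_, ?_, ?_⟩
        · intro q hq
          rw [Finset.mem_singleton] at hq
          subst hq
          refine ⟨qle_mem P hp hu.1, hu.1, ?_⟩
          rintro rfl
          exact hrp hu.2.1
        · intro h
          exact absurd h hrp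
        · intro _ x hx
          simp only [Set.mem_iUnion, Finset.mem_singleton]
          exact ⟨u, rfl, hu.2.2 x hx.1 hx.2⟩
      · refine ⟨∅, by simp, ?_, ?_⟩
        · intro h
          exact absurd h hrp
        · intro _ x hx
          exact absurd ⟨x, hx.1, hx.2⟩ hex
  | compl Ω h ih =>
    obtain ⟨J, hJ, h1, h2⟩ := ih
    refine ⟨J, hJ, ?_, ?_⟩
    · intro hpΩ x hx
      exact h2 hpΩ.2 ⟨hx.1, by
        by_contra hxΩ
        exact hx.2 ⟨qle_mem P hp hx.1, hxΩ⟩⟩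
    · intro hpΩ x hx
      have hpΩ' : p ∈ Ω := by
        by_contra hc
        exact hpΩ ⟨hp, hc⟩
      exact h1 hpΩ' ⟨hx.1, hx.2.2⟩
  | union Ω₁ Ω₂ hm1 hm2 ih1 ih2 =>
    obtain ⟨J₁, hJ₁, h11, h12⟩ := ih1
    obtain ⟨J₂, hJ₂, h21, h22⟩ := ih2
    refine ⟨J₁ ∪ J₂, ?_, ?_, ?_⟩
    · intro q hq
      rcases Finset.mem_union.1 hq with h | h
      · exact hJ₁ q h
      · exact hJ₂ q h
    · intro hpΩ x hx
      rcases hpΩ with hp1 | hp2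
      · have := h11 hp1 ⟨hx.1, fun hc => hx.2 (Or.inl hc)⟩
        simp only [Set.mem_iUnion, Finset.mem_union] at this ⊢
        obtain ⟨q, hq, hqx⟩ := this
        exact ⟨q, Or.inl hq, hqx⟩
      · have := h21 hp2 ⟨hx.1, fun hc => hx.2 (Or.inr hc)⟩
        simp only [Set.mem_iUnion, Finset.mem_union] at this ⊢
        obtain ⟨q, hq, hqx⟩ := this
        exact ⟨q, Or.inr hq, hqx⟩
    · intro hpΩ x hx
      have hp1 : p ∉ Ω₁ := fun hc => hpΩ (Or.inl hc)
      have hp2 : p ∉ Ω₂ := fun hc => hpΩ (Or.inr hc)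
      rcases hx.2 with hx1 | hx2
      · have := h12 hp1 ⟨hx.1, hx1⟩
        simp only [Set.mem_iUnion, Finset.mem_union] at this ⊢
        obtain ⟨q, hq, hqx⟩ := this
        exact ⟨q, Or.inl hq, hqx⟩
      · have := h22 hp2 ⟨hx.1, hx2⟩
        simp only [Set.mem_iUnion, Finset.mem_union] at this ⊢
        obtain ⟨q, hq, hqx⟩ := this
        exact ⟨q, Or.inr hq, hqx⟩
  | inter Ω₁ Ω₂ hm1 hm2 ih1 ih2 =>
    obtain ⟨J₁, hJ₁, h11, h12⟩ := ih1
    obtain ⟨J₂, hJ₂, h21, h22⟩ := ih2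
    refine ⟨J₁ ∪ J₂, ?_, ?_, ?_⟩
    · intro q hq
      rcases Finset.mem_union.1 hq with h | h
      · exact hJ₁ q h
      · exact hJ₂ q h
    · intro hpΩ x hx
      by_cases hx1 : x ∈ Ω₁
      · have := h21 hpΩ.2 ⟨hx.1, fun hc => hx.2 ⟨hx1, hc⟩⟩
        simp only [Set.mem_iUnion, Finset.mem_union] at this ⊢
        obtain ⟨q, hq, hqx⟩ := this
        exact ⟨q, Or.inr hq, hqx⟩
      · have := h11 hpΩ.1 ⟨hx.1, hx1⟩
        simp only [Set.mem_iUnion, Finset.mem_union] at this ⊢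
        obtain ⟨q, hq, hqx⟩ := this
        exact ⟨q, Or.inl hq, hqx⟩
    · intro hpΩ x hx
      by_cases hp1 : p ∈ Ω₁
      · have hp2 : p ∉ Ω₂ := fun hc => hpΩ ⟨hp1, hc⟩
        have := h22 hp2 ⟨hx.1, hx.2.2⟩
        simp only [Set.mem_iUnion, Finset.mem_union] at this ⊢
        obtain ⟨q, hq, hqx⟩ := this
        exact ⟨q, Or.inr hq, hqx⟩
      · have := h12 hp1 ⟨hx.1, hx.2.1⟩
        simp only [Set.mem_iUnion, Finset.mem_union] at this ⊢
        obtain ⟨q, hq, hqx⟩ := this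
        exact ⟨q, Or.inl hq, hqx⟩

end Aux

/-- If `F ⊆ P` is finite and for each `p ∈ F` a set `Ω p ∈ B_P` containing `p` is given,
then there is a finite `E ⊆ P` with `E ∩ F = ∅` such that
`P = (⋃_{p ∈ F} Ω p) ∪ (⋃_{q ∈ E} qP)`. -/
theorem stmt5 {G : Type*} [Group G] (P : Submonoid G) (hQL : QuasiLatticeOrdered P)
    (F : Finset G) (hF : ↑F ⊆ (P : Set G)) (Ω : G → Set G)
    (hΩ : ∀ p ∈ F, MemBP P (Ω p) ∧ p ∈ Ω p) :
    ∃ E : Finset G, ↑E ⊆ (P : Set G) ∧ (∀ q ∈ E, q ∉ F) ∧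
      (P : Set G) = (⋃ p ∈ F, Ω p) ∪ ⋃ q ∈ E, {x | QLe P q x} := by
  classical
  have key : ∀ n : ℕ, ∀ q : G, q ∈ P → (F.filter (fun r => QLe P q r)).card ≤ n →
      ∃ E : Finset G, ↑E ⊆ (P : Set G) ∧ (∀ e ∈ E, e ∉ F) ∧
        {x | QLe P q x} ⊆ (⋃ p ∈ F, Ω p) ∪ ⋃ e ∈ E, {x | QLe P e x} := by
    intro n
    induction n with
    | zero =>
      intro q hq hcard
      have hqF : q ∉ F := by
        intro h
        have hmem : q ∈ F.filter (fun r => QLe P q r) :=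
          Finset.mem_filter.2 ⟨h, qle_refl P q⟩
        have := Finset.card_pos.2 ⟨q, hmem⟩
        omega
      refine ⟨{q}, by simpa using hq, by simpa using hqF, ?_⟩
      intro x hx
      right
      simp only [Finset.mem_singleton, Set.mem_iUnion]
      exact ⟨q, rfl, hx⟩
    | succ n ih =>
      intro q hq hcard
      by_cases hqF : q ∈ F
      · obtain ⟨hmem, hpin⟩ := hΩ q hqF
        obtain ⟨J, hJ, hcov, _⟩ := local_cover P hQL hmem q hq
        have hrec : ∀ r ∈ J, ∃ E : Finset G, ↑E ⊆ (P : Set G) ∧ (∀ e ∈ E, e ∉ F) ∧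
            {x | QLe P r x} ⊆ (⋃ p ∈ F, Ω p) ∪ ⋃ e ∈ E, {x | QLe P e x} := by
          intro r hr
          obtain ⟨hrP, hqr, hrq⟩ := hJ r hr
          apply ih r hrP
          have hsub : F.filter (fun s => QLe P r s) ⊆
              (F.filter (fun s => QLe P q s)).erase q := by
            intro s hs
            rw [Finset.mem_filter] at hs
            refine Finset.mem_erase.2 ⟨?_, Finset.mem_filter.2 ⟨hs.1, qle_trans P hqr hs.2⟩⟩
            rintro rfl
            exact hrq (qle_antisymm P hQL hqr hs.2)
          have h1 : q ∈ F.filter (fun s => QLe P q s) :=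
            Finset.mem_filter.2 ⟨hqF, qle_refl P q⟩
          have h2 := Finset.card_le_card hsub
          rw [Finset.card_erase_of_mem h1] at h2
          have h3 := Finset.card_pos.2 ⟨q, h1⟩
          omega
        choose Efun hE1 hE2 hE3 using hrec
        refine ⟨J.attach.biUnion (fun r => Efun r r.2), ?_, ?_, ?_⟩
        · intro e he
          simp only [Finset.coe_biUnion, Set.mem_iUnion, Finset.mem_coe] at he
          obtain ⟨r, hr, hre⟩ := he
          exact hE1 r r.2 hre
        · intro e he
          simp only [Finset.mem_biUnion, Finset.mem_attach, true_and] at he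
          obtain ⟨r, hre⟩ := he
          exact hE2 r r.2 e hre
        · intro x hx
          by_cases hxΩ : x ∈ Ω q
          · left
            exact Set.mem_biUnion hqF hxΩ
          · have := hcov hpin ⟨hx, hxΩ⟩
            simp only [Set.mem_iUnion] at this
            obtain ⟨r, hr, hrx⟩ := this
            rcases hE3 r hr hrx with hl | hr'
            · exact Or.inl hl
            · right
              simp only [Set.mem_iUnion] at hr' ⊢
              obtain ⟨e, hee, hex⟩ := hr'
              refine ⟨e, ?_, hex⟩
              simp only [Finset.mem_biUnion, Finset.mem_attach, true_and]
              exact ⟨⟨r, hr⟩, hee⟩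
      · refine ⟨{q}, by simpa using hq, by simpa using hqF, ?_⟩
        intro x hx
        right
        simp only [Set.mem_iUnion]
        exact ⟨q, Finset.mem_singleton_self q, hx⟩
  obtain ⟨E, hE1, hE2, hE3⟩ := key F.card 1 (one_mem P) (Finset.card_filter_le _ _)
  refine ⟨E, hE1, hE2, ?_⟩
  apply Set.Subset.antisymm
  · intro x hx
    exact hE3 (by simpa [QLe] using hx)
  · apply Set.union_subset
    · intro x hx
      simp only [Set.mem_iUnion] at hx
      obtain ⟨p, hp, hxp⟩ := hx
      exact memBP_subset P (hΩ p hp).1 hxp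
    · intro x hx
      simp only [Set.mem_iUnion] at hx
      obtain ⟨e, he, hxe⟩ := hx
      exact qle_mem P (hE1 he) hxe
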